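/- Let ψ be a solution of −ψ'' + Wψ = λψ on (0, l) with ‖W − λ‖_∞ ≤ K, and let S ⊂ [0, l] be an interval of positive length |S|. Then there exists a constant C₁ > 0, depending only on K, l, and |S| (explicitly one may take C₁ = e^{−C₄ l} |S| / l with C₄ = C₄(K)), such that ∫_S |ψ|² ≥ C₁ ∫_0^l |ψ|². -/

import Mathlib

open Set Real

lemma gronwall_aux {E E' : ℝ → ℝ} {C t₁ t₂ : ℝ} (h12 : t₁ ≤ t₂)
    (hd : ∀ x ∈ Set.Icc t₁ t₂, HasDerivAt E (E' x) x)
    (hb : ∀ x ∈ Set.Icc t₁ t₂, |E' x| ≤ C * E x) :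
    E t₂ ≤ Real.exp (C * (t₂ - t₁)) * E t₁ ∧ E t₁ ≤ Real.exp (C * (t₂ - t₁)) * E t₂ := by
  constructor
  · set g : ℝ → ℝ := fun x => E x * Real.exp (-C * x) with hgdef
    have hg : ∀ x ∈ Set.Icc t₁ t₂, HasDerivAt g ((E' x - C * E x) * Real.exp (-C * x)) x := by
      intro x hx
      have h2 : HasDerivAt (fun x : ℝ => Real.exp (-C * x)) (Real.exp (-C * x) * (-C)) x := by
        simpa using ((hasDerivAt_id x).const_mul (-C)).exp
      have h1 := (hd x hx).mul h2
      exact h1.congr_deriv (by ring)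
    have anti : AntitoneOn g (Set.Icc t₁ t₂) := by
      apply antitoneOn_of_deriv_nonpos (convex_Icc _ _)
      · exact fun x hx => (hg x hx).continuousAt.continuousWithinAt
      · intro x hx
        rw [interior_Icc] at hx
        exact ((hg x (Ioo_subset_Icc_self hx)).differentiableAt).differentiableWithinAt
      · intro x hx
        rw [interior_Icc] at hx
        rw [(hg x (Ioo_subset_Icc_self hx)).deriv]
        have h3 := hb x (Ioo_subset_Icc_self hx)
        have h4 : E' x - C * E x ≤ 0 := by
          have := abs_le.1 h3
          linarith [this.2]
        exact mul_nonpos_of_nonpos_of_nonneg h4 (Real.exp_nonneg _)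
    have h5 : g t₂ ≤ g t₁ := anti (Set.left_mem_Icc.2 h12) (Set.right_mem_Icc.2 h12) h12
    have h6 := mul_le_mul_of_nonneg_right h5 (Real.exp_nonneg (C * t₂))
    simp only [hgdef, mul_assoc, ← Real.exp_add] at h6
    have e1 : -C * t₂ + C * t₂ = 0 := by ring
    have e2 : -C * t₁ + C * t₂ = C * (t₂ - t₁) := by ring
    rw [e1, e2, Real.exp_zero, mul_one] at h6
    linarith [h6]
  · set g : ℝ → ℝ := fun x => E x * Real.exp (C * x) with hgdef
    have hg : ∀ x ∈ Set.Icc t₁ t₂, HasDerivAt g ((E' x + C * E x) * Real.exp (C * x)) x := by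
      intro x hx
      have h2 : HasDerivAt (fun x : ℝ => Real.exp (C * x)) (Real.exp (C * x) * C) x := by
        simpa using ((hasDerivAt_id x).const_mul C).exp
      have h1 := (hd x hx).mul h2
      exact h1.congr_deriv (by ring)
    have mono : MonotoneOn g (Set.Icc t₁ t₂) := by
      apply monotoneOn_of_deriv_nonneg (convex_Icc _ _)
      · exact fun x hx => (hg x hx).continuousAt.continuousWithinAt
      · intro x hx
        rw [interior_Icc] at hx
        exact ((hg x (Ioo_subset_Icc_self hx)).differentiableAt).differentiableWithinAt
      · intro x hx
        rw [interior_Icc] at hx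
        rw [(hg x (Ioo_subset_Icc_self hx)).deriv]
        have h3 := hb x (Ioo_subset_Icc_self hx)
        have h4 : 0 ≤ E' x + C * E x := by
          have := abs_le.1 h3
          linarith [this.1]
        exact mul_nonneg h4 (Real.exp_nonneg _)
    have h5 : g t₁ ≤ g t₂ := mono (Set.left_mem_Icc.2 h12) (Set.right_mem_Icc.2 h12) h12
    have h6 := mul_le_mul_of_nonneg_right h5 (Real.exp_nonneg (-C * t₁))
    simp only [hgdef, mul_assoc, ← Real.exp_add] at h6
    have e1 : C * t₁ + -C * t₁ = 0 := by ring
    have e2 : C * t₂ + -C * t₁ = C * (t₂ - t₁) := by ring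
    rw [e1, e2, Real.exp_zero, mul_one] at h6
    linarith [h6]

open MeasureTheory Set

set_option maxHeartbeats 4000000 in
/-- One-dimensional unique continuation estimate: if `ψ` solves
`-ψ'' + Wψ = λψ` on `(0,l)` with `‖W - λ‖_∞ ≤ K`, and `S = [a,b] ⊂ [0,l]` is an
interval of length `s = b - a > 0`, then `∫_S |ψ|² ≥ C₁ ∫_0^l |ψ|²` where
`C₁ > 0` depends only on `K`, `l` and `s`. -/
theorem unique_continuation_interval (K l s : ℝ) (hK : 0 ≤ K) (hl : 0 < l)
    (hs : 0 < s) (hsl : s ≤ l) :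
    ∃ C₁ : ℝ, 0 < C₁ ∧
      ∀ (lam a b : ℝ) (ψ : ℝ → ℂ) (W : ℝ → ℝ),
        0 ≤ a → b ≤ l → b - a = s →
        ContDiffOn ℝ 2 ψ (Icc 0 l) →
        Measurable W →
        (∀ x ∈ Icc 0 l, |W x - lam| ≤ K) →
        (∀ x ∈ Ioo 0 l, -(deriv (deriv ψ) x) + (W x : ℂ) * ψ x = (lam : ℂ) * ψ x) →
        C₁ * ∫ x in Icc 0 l, ‖ψ x‖ ^ 2 ≤ ∫ x in Icc a b, ‖ψ x‖ ^ 2 := by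
  set c₃ : ℝ := 12/s + 864/s^3 + 2*K^2*s with hc₃def
  have hc₃ : 0 < c₃ := by positivity
  set D : ℝ := l * Real.exp ((1+K)*l) * c₃ with hDdef
  have hD : 0 < D := by positivity
  refine ⟨1/D, by positivity, ?_⟩
  intro lam a b ψ W ha hbl hba hψ2 hW hWK hode
  have hb : b = a + s := by linarith
  have habs : Icc a b ⊆ Icc 0 l := Icc_subset_Icc ha hbl
  have hψc : ContinuousOn ψ (Icc 0 l) := hψ2.continuousOn
  have hU : ContDiffOn ℝ 2 ψ (Ioo 0 l) := hψ2.mono Ioo_subset_Icc_self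
  set f := deriv ψ with hfdef
  set g := deriv f with hgdef
  have hψd : ∀ t ∈ Ioo 0 l, HasDerivAt ψ (f t) t := by
    intro t ht
    exact ((hU.differentiableOn (by norm_num)).differentiableAt
      (isOpen_Ioo.mem_nhds ht)).hasDerivAt
  have hf1 : ContDiffOn ℝ 1 f (Ioo 0 l) := hU.deriv_of_isOpen isOpen_Ioo (by norm_num)
  have hfd : ∀ t ∈ Ioo 0 l, HasDerivAt f (g t) t := by
    intro t ht
    exact ((hf1.differentiableOn (by norm_num)).differentiableAt
      (isOpen_Ioo.mem_nhds ht)).hasDerivAt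
  have hfc : ContinuousOn f (Ioo 0 l) := hf1.continuousOn
  have hgc : ContinuousOn g (Ioo 0 l) :=
    hf1.continuousOn_deriv_of_isOpen isOpen_Ioo le_rfl
  have hg_eq : ∀ x ∈ Ioo 0 l, g x = ((W x : ℂ) - lam) * ψ x := by
    intro x hx
    have h := hode x hx
    rw [hgdef, hfdef]
    linear_combination -h
  have hg_norm : ∀ x ∈ Ioo 0 l, ‖g x‖ ≤ K * ‖ψ x‖ := by
    intro x hx
    rw [hg_eq x hx, norm_mul]
    have h1 : ‖(W x : ℂ) - lam‖ = |W x - lam| := by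
      rw [show ((W x : ℂ) - lam) = ((W x - lam : ℝ) : ℂ) by push_cast; ring,
        Complex.norm_real, Real.norm_eq_abs]
    rw [h1]
    exact mul_le_mul_of_nonneg_right (hWK x (Ioo_subset_Icc_self hx)) (norm_nonneg _)
  -- energy function
  have hEd : ∀ t ∈ Ioo 0 l, HasDerivAt (fun t => ‖ψ t‖^2 + ‖f t‖^2)
      (2 * (inner ℝ (ψ t) (f t) : ℝ) + 2 * (inner ℝ (f t) (g t) : ℝ)) t := by
    intro t ht
    exact ((hψd t ht).norm_sq).add ((hfd t ht).norm_sq)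
  have hEb : ∀ t ∈ Ioo 0 l, |2 * (inner ℝ (ψ t) (f t) : ℝ) + 2 * (inner ℝ (f t) (g t) : ℝ)|
      ≤ (1+K) * (‖ψ t‖^2 + ‖f t‖^2) := by
    intro t ht
    have h1 : |(inner ℝ (ψ t) (f t) : ℝ)| ≤ ‖ψ t‖ * ‖f t‖ := abs_real_inner_le_norm _ _
    have h2 : |(inner ℝ (f t) (g t) : ℝ)| ≤ ‖f t‖ * ‖g t‖ := abs_real_inner_le_norm _ _
    have h3 := hg_norm t ht
    have h4 : ‖f t‖ * ‖g t‖ ≤ ‖f t‖ * (K * ‖ψ t‖) :=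
      mul_le_mul_of_nonneg_left h3 (norm_nonneg _)
    have h2' := h2.trans h4
    rw [abs_le]
    constructor <;>
      nlinarith [abs_le.1 h1, abs_le.1 h2', sq_nonneg (‖ψ t‖ - ‖f t‖),
        norm_nonneg (ψ t), norm_nonneg (f t), hK,
        mul_nonneg hK (sq_nonneg (‖ψ t‖ - ‖f t‖))]
  -- minimum points
  have hsub1 : Icc (a + s/4) (a + s/3) ⊆ Icc a b :=
    Icc_subset_Icc (by linarith) (by linarith)
  have hsub2 : Icc (b - s/3) (b - s/4) ⊆ Icc a b :=
    Icc_subset_Icc (by linarith) (by linarith)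
  obtain ⟨x₁, hx₁mem, hx₁min⟩ := isCompact_Icc.exists_isMinOn
    (nonempty_Icc.2 (by linarith)) ((hψc.mono (hsub1.trans habs)).norm)
  obtain ⟨x₂, hx₂mem, hx₂min⟩ := isCompact_Icc.exists_isMinOn
    (nonempty_Icc.2 (by linarith)) ((hψc.mono (hsub2.trans habs)).norm)
  rw [isMinOn_iff] at hx₁min hx₂min
  obtain ⟨hx₁a, hx₁b⟩ := hx₁mem
  obtain ⟨hx₂a, hx₂b⟩ := hx₂mem
  have hx₁U : x₁ ∈ Ioo 0 l := ⟨by linarith, by linarith⟩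
  have hx₂U : x₂ ∈ Ioo 0 l := ⟨by linarith, by linarith⟩
  have hx₁₂ : x₁ + s/3 ≤ x₂ := by linarith
  have hx12 : x₁ ≤ x₂ := by linarith
  have hsubx : Icc x₁ x₂ ⊆ Ioo 0 l := Icc_subset_Ioo hx₁U.1 hx₂U.2
  have hsubxab : Icc x₁ x₂ ⊆ Icc a b := Icc_subset_Icc (by linarith) (by linarith)
  -- the two integrals
  set T : ℝ := ∫ x in Icc a b, ‖ψ x‖^2 with hTdef
  set I : ℝ := ∫ x in Icc a b, ‖ψ x‖ with hIdef
  have hψsqc : ContinuousOn (fun x => ‖ψ x‖^2) (Icc 0 l) := (hψc.norm).pow 2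
  have hψnc : ContinuousOn (fun x => ‖ψ x‖) (Icc 0 l) := hψc.norm
  have hTi : IntegrableOn (fun x => ‖ψ x‖^2) (Icc a b) :=
    ((hψsqc.mono habs).integrableOn_Icc)
  have hIi : IntegrableOn (fun x => ‖ψ x‖) (Icc a b) :=
    ((hψnc.mono habs).integrableOn_Icc)
  have hT0 : 0 ≤ T := setIntegral_nonneg measurableSet_Icc (fun x _ => by positivity)
  have hI0 : 0 ≤ I := setIntegral_nonneg measurableSet_Icc (fun x _ => by positivity)
  -- min value bounds
  have hmv : ∀ (c d : ℝ), a ≤ c → c ≤ d → d ≤ b → ∀ z, (∀ y ∈ Icc c d, ‖ψ z‖ ≤ ‖ψ y‖) →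
      ‖ψ z‖^2 * (d - c) ≤ T := by
    intro c d hac hcd hdb z hz
    have hsub : Icc c d ⊆ Icc a b := Icc_subset_Icc hac hdb
    have h1 : ‖ψ z‖^2 * (volume (Icc c d)).toReal ≤ ∫ x in Icc c d, ‖ψ x‖^2 := by
      apply setIntegral_ge_of_const_le_real measurableSet_Icc
      · exact (measure_Icc_lt_top).ne
      · intro x hx
        exact pow_le_pow_left₀ (norm_nonneg _) (hz x hx) 2
      · exact hTi.mono_set hsub
    have h2 : ∫ x in Icc c d, ‖ψ x‖^2 ≤ T := by
      apply setIntegral_mono_set hTi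
      · exact Filter.Eventually.of_forall (fun x => by positivity)
      · exact HasSubset.Subset.eventuallyLE hsub
    rw [Real.volume_Icc, ENNReal.toReal_ofReal (by linarith)] at h1
    exact h1.trans h2
  have hP₁ : ‖ψ x₁‖^2 * (s/12) ≤ T := by
    have := hmv (a + s/4) (a + s/3) (by linarith) (by linarith) (by linarith) x₁ hx₁min
    calc ‖ψ x₁‖^2 * (s/12) = ‖ψ x₁‖^2 * ((a + s/3) - (a + s/4)) := by ring_nf
      _ ≤ T := this
  have hP₂ : ‖ψ x₂‖^2 * (s/12) ≤ T := by
    have := hmv (b - s/3) (b - s/4) (by linarith) (by linarith) (by linarith) x₂ hx₂min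
    calc ‖ψ x₂‖^2 * (s/12) = ‖ψ x₂‖^2 * ((b - s/4) - (b - s/3)) := by ring_nf
      _ ≤ T := this
  -- FTC and bound on f x₁
  have hfint : IntervalIntegrable f volume x₁ x₂ :=
    (hfc.mono ((uIcc_of_le hx12).symm ▸ hsubx)).intervalIntegrable
  have hFTC1 : ∫ t in x₁..x₂, f t = ψ x₂ - ψ x₁ := by
    apply intervalIntegral.integral_eq_sub_of_hasDerivAt
    · intro t ht
      exact hψd t (hsubx ((uIcc_of_le hx12) ▸ ht))
    · exact hfint
  have hfr : ∀ r ∈ Icc x₁ x₂, ‖f r - f x₁‖ ≤ K * I := by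
    intro r hr
    have hx₁r : x₁ ≤ r := hr.1
    have hsubr : Icc x₁ r ⊆ Icc x₁ x₂ := Icc_subset_Icc le_rfl hr.2
    have h71 : ∫ t in x₁..r, g t = f r - f x₁ := by
      apply intervalIntegral.integral_eq_sub_of_hasDerivAt
      · intro t ht
        exact hfd t (hsubx (hsubr ((uIcc_of_le hx₁r) ▸ ht)))
      · exact (hgc.mono ((uIcc_of_le hx₁r).symm ▸ (hsubr.trans hsubx))).intervalIntegrable
    have hIocsub : Ioc x₁ r ⊆ Icc x₁ x₂ := fun x hx => hsubr ⟨le_of_lt hx.1, hx.2⟩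
    rw [← h71]
    calc ‖∫ t in x₁..r, g t‖ ≤ ∫ t in x₁..r, ‖g t‖ :=
          intervalIntegral.norm_integral_le_integral_norm hx₁r
      _ = ∫ t in Ioc x₁ r, ‖g t‖ := intervalIntegral.integral_of_le hx₁r
      _ ≤ ∫ t in Ioc x₁ r, K * ‖ψ t‖ := by
          apply setIntegral_mono_on
          · exact MeasureTheory.IntegrableOn.mono_set
              ((hgc.mono hsubx).norm.integrableOn_Icc) hIocsub
          · exact MeasureTheory.IntegrableOn.mono_set
              ((hψnc.mono habs).integrableOn_Icc.const_mul K)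
              (hIocsub.trans hsubxab)
          · exact measurableSet_Ioc
          · intro t ht
            exact hg_norm t (hsubx (hIocsub ht))
      _ ≤ ∫ t in Icc a b, K * ‖ψ t‖ := by
          apply setIntegral_mono_set
          · exact (hψnc.mono habs).integrableOn_Icc.const_mul K
          · exact Filter.Eventually.of_forall (fun x => by positivity)
          · exact HasSubset.Subset.eventuallyLE (hIocsub.trans hsubxab)
      _ = K * I := by rw [hIdef]; exact integral_const_mul K _
  -- bound on ‖f x₁‖
  have hd32 : s/3 ≤ x₂ - x₁ := by linarith
  have hd0 : 0 < x₂ - x₁ := by linarith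
  have hKI : 0 ≤ K * I := mul_nonneg hK hI0
  have hkey : (x₂ - x₁) • f x₁ = (ψ x₂ - ψ x₁) - ∫ t in x₁..x₂, (f t - f x₁) := by
    have hsub' : ∫ t in x₁..x₂, (f t - f x₁)
        = (∫ t in x₁..x₂, f t) - ∫ t in x₁..x₂, (f x₁ : ℂ) :=
      intervalIntegral.integral_sub hfint intervalIntegrable_const
    rw [hsub', hFTC1, intervalIntegral.integral_const]
    abel
  have hbound2 : ‖∫ t in x₁..x₂, (f t - f x₁)‖ ≤ (K*I) * |x₂ - x₁| := by
    apply intervalIntegral.norm_integral_le_of_norm_le_const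
    intro t ht
    rw [uIoc_of_le hx12] at ht
    exact hfr t (Ioc_subset_Icc_self ht)
  have hfx₁ : ‖f x₁‖ ≤ (3/s) * (‖ψ x₁‖ + ‖ψ x₂‖) + K * I := by
    have h2 := congrArg norm hkey
    rw [norm_smul, Real.norm_eq_abs, abs_of_pos hd0] at h2
    rw [abs_of_pos hd0] at hbound2
    have h3 := (norm_sub_le (ψ x₂ - ψ x₁) (∫ t in x₁..x₂, (f t - f x₁)))
    have h4 := norm_sub_le (ψ x₂) (ψ x₁)
    have h1 : (x₂ - x₁) * ‖f x₁‖ ≤ ‖ψ x₁‖ + ‖ψ x₂‖ + (x₂ - x₁) * (K * I) := by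
      rw [h2]; linarith
    rcases le_or_gt ‖f x₁‖ (K*I) with hcase|hcase
    · have : 0 ≤ (3/s) * (‖ψ x₁‖ + ‖ψ x₂‖) := by positivity
      linarith
    · have hstep : s/3 * (‖f x₁‖ - K*I) ≤ ‖ψ x₁‖ + ‖ψ x₂‖ := by
        have hmm := mul_le_mul_of_nonneg_right hd32 (by linarith : (0:ℝ) ≤ ‖f x₁‖ - K*I)
        have e : (x₂-x₁)*(‖f x₁‖-K*I) = (x₂-x₁)*‖f x₁‖ - (x₂-x₁)*(K*I) := by ring
        linarith [hmm, e, h1]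
      have := mul_le_mul_of_nonneg_left hstep (by positivity : (0:ℝ) ≤ 3/s)
      rw [show (3/s) * (s/3 * (‖f x₁‖ - K*I)) = ‖f x₁‖ - K*I by field_simp] at this
      linarith
  -- Cauchy-Schwarz
  have hCS : I^2 ≤ s * T := by
    have haux : ∀ ε : ℝ, 0 < ε → I ≤ T/(2*ε) + ε/2 * s := by
      intro ε hε0
      have h2ε : 0 < 2*ε := by linarith
      have hpt : ∀ x ∈ Icc a b, ‖ψ x‖ ≤ ‖ψ x‖^2/(2*ε) + ε/2 := by
        intro x _
        have := (le_div_iff₀ h2ε).2 (by nlinarith [sq_nonneg (‖ψ x‖ - ε)] :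
          ‖ψ x‖ * (2*ε) ≤ ‖ψ x‖^2 + ε^2)
        calc ‖ψ x‖ ≤ (‖ψ x‖^2 + ε^2)/(2*ε) := this
          _ = ‖ψ x‖^2/(2*ε) + ε/2 := by field_simp
      have hconst : IntegrableOn (fun _ : ℝ => ε/2) (Icc a b) :=
        integrableOn_const measure_Icc_lt_top.ne
      have h1 : I ≤ ∫ x in Icc a b, (‖ψ x‖^2/(2*ε) + ε/2) := by
        apply setIntegral_mono_on hIi ((hTi.div_const _).add hconst) measurableSet_Icc hpt
      have h2 : ∫ x in Icc a b, (‖ψ x‖^2/(2*ε) + ε/2) = T/(2*ε) + ε/2 * s := by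
        rw [integral_add (hTi.div_const _) hconst, integral_div, setIntegral_const,
          Real.volume_real_Icc_of_le (by linarith : a ≤ b), hba]
        simp only [smul_eq_mul]
        ring
      rw [h2] at h1
      exact h1
    rcases eq_or_lt_of_le hI0 with h|h
    · rw [← h, zero_pow (by norm_num)]
      exact mul_nonneg hs.le hT0
    · have h1 := haux (I/s) (div_pos h hs)
      have hI' : I ≤ s*T/(2*I) + I/2 := by
        have e1 : T/(2*(I/s)) = s*T/(2*I) := by
          rw [div_eq_div_iff (by positivity) (by positivity)]
          field_simp
        have e2 : (I/s)/2 * s = I/2 := by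
          field_simp
        calc I ≤ T/(2*(I/s)) + (I/s)/2 * s := h1
          _ = s*T/(2*I) + I/2 := by rw [e1, e2]
      have h3 := mul_le_mul_of_nonneg_left hI' (le_of_lt h)
      have e3 : I * (s*T/(2*I) + I/2) = s*T/2 + I^2/2 := by
        field_simp
      rw [e3] at h3
      nlinarith [h3]
  -- E x₁ ≤ c₃ * T
  have hP₁' : ‖ψ x₁‖^2 ≤ 12/s * T := by
    have h := mul_le_mul_of_nonneg_left hP₁ (by positivity : (0:ℝ) ≤ 12/s)
    calc ‖ψ x₁‖^2 = 12/s * (‖ψ x₁‖^2 * (s/12)) := by field_simp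
      _ ≤ 12/s * T := h
  have hP₂' : ‖ψ x₂‖^2 ≤ 12/s * T := by
    have h := mul_le_mul_of_nonneg_left hP₂ (by positivity : (0:ℝ) ≤ 12/s)
    calc ‖ψ x₂‖^2 = 12/s * (‖ψ x₂‖^2 * (s/12)) := by field_simp
      _ ≤ 12/s * T := h
  have hQ₁ : s * ‖ψ x₁‖^2 ≤ 12 * T := by linarith [hP₁]
  have hQ₂ : s * ‖ψ x₂‖^2 ≤ 12 * T := by linarith [hP₂]
  have hfx₁sq : ‖f x₁‖^2 ≤ 864/s^3 * T + 2*K^2*s*T := by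
    have hFs : s * ‖f x₁‖ ≤ 3*(‖ψ x₁‖+‖ψ x₂‖) + s*(K*I) := by
      have h := mul_le_mul_of_nonneg_left hfx₁ hs.le
      calc s * ‖f x₁‖ ≤ s*((3/s)*(‖ψ x₁‖+‖ψ x₂‖)+K*I) := h
        _ = 3*(‖ψ x₁‖+‖ψ x₂‖) + s*(K*I) := by field_simp
    have hFs2 : (s * ‖f x₁‖)^2 ≤ (3*(‖ψ x₁‖+‖ψ x₂‖) + s*(K*I))^2 :=
      pow_le_pow_left₀ (by positivity) hFs 2
    have hYY : s^3*K^2*I^2 ≤ s^3*K^2*(s*T) :=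
      mul_le_mul_of_nonneg_left hCS (by positivity)
    have hgoal3 : s^3 * ‖f x₁‖^2 ≤ 864*T + 2*K^2*s^4*T := by
      nlinarith [hFs2, hQ₁, hQ₂, hYY,
        mul_nonneg hs.le (sq_nonneg (‖ψ x₁‖ - ‖ψ x₂‖)),
        mul_nonneg hs.le (sq_nonneg (3*(‖ψ x₁‖+‖ψ x₂‖) - s*(K*I))), hs.le, hT0]
    have hs3 : (0:ℝ) < s^3 := by positivity
    calc ‖f x₁‖^2 = (s^3 * ‖f x₁‖^2)/s^3 := by field_simp
      _ ≤ (864*T + 2*K^2*s^4*T)/s^3 := (div_le_div_iff_of_pos_right hs3).2 hgoal3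
      _ = 864/s^3 * T + 2*K^2*s*T := by field_simp
  have hEx₁ : ‖ψ x₁‖^2 + ‖f x₁‖^2 ≤ c₃ * T :=
    calc ‖ψ x₁‖^2 + ‖f x₁‖^2 ≤ 12/s * T + (864/s^3 * T + 2*K^2*s*T) :=
          add_le_add hP₁' hfx₁sq
      _ = c₃ * T := by rw [hc₃def]; ring
  -- Gronwall: energy at any point controlled by energy at x₁
  have hEx₁0 : (0:ℝ) ≤ ‖ψ x₁‖^2 + ‖f x₁‖^2 := by positivity
  have hexp : ∀ d : ℝ, d ≤ l → Real.exp ((1+K)*d) ≤ Real.exp ((1+K)*l) :=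
    fun d hd => Real.exp_le_exp.2 (mul_le_mul_of_nonneg_left hd (by linarith))
  have hsup : ∀ x ∈ Ioo 0 l,
      ‖ψ x‖^2 + ‖f x‖^2 ≤ Real.exp ((1+K)*l) * (‖ψ x₁‖^2 + ‖f x₁‖^2) := by
    intro x hx
    rcases le_total x x₁ with h|h
    · have hIcc : Icc x x₁ ⊆ Ioo 0 l := Icc_subset_Ioo hx.1 hx₁U.2
      obtain ⟨-, h2⟩ := gronwall_aux (E := fun t => ‖ψ t‖^2 + ‖f t‖^2)
        (E' := fun t => 2 * (inner ℝ (ψ t) (f t) : ℝ) + 2 * (inner ℝ (f t) (g t) : ℝ))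
        h (fun y hy => hEd y (hIcc hy)) (fun y hy => hEb y (hIcc hy))
      refine h2.trans ?_
      exact mul_le_mul_of_nonneg_right (hexp _ (by
        have := hx.1; have := hx₁U.2; linarith)) hEx₁0
    · have hIcc : Icc x₁ x ⊆ Ioo 0 l := Icc_subset_Ioo hx₁U.1 hx.2
      obtain ⟨h1, -⟩ := gronwall_aux (E := fun t => ‖ψ t‖^2 + ‖f t‖^2)
        (E' := fun t => 2 * (inner ℝ (ψ t) (f t) : ℝ) + 2 * (inner ℝ (f t) (g t) : ℝ))
        h (fun y hy => hEd y (hIcc hy)) (fun y hy => hEb y (hIcc hy))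
      refine h1.trans ?_
      exact mul_le_mul_of_nonneg_right (hexp _ (by
        have := hx.2; have := hx₁U.1; linarith)) hEx₁0
  -- final assembly
  have hfinal : ∫ x in Icc 0 l, ‖ψ x‖^2 ≤ D * T := by
    have h1 : (∫ x in Icc 0 l, ‖ψ x‖^2) = ∫ x in Ioo 0 l, ‖ψ x‖^2 :=
      integral_Icc_eq_integral_Ioo
    have h2 : (∫ x in Ioo 0 l, ‖ψ x‖^2)
        ≤ ∫ _x in Ioo 0 l, Real.exp ((1+K)*l) * (‖ψ x₁‖^2 + ‖f x₁‖^2) := by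
      apply setIntegral_mono_on
      · exact MeasureTheory.IntegrableOn.mono_set hψsqc.integrableOn_Icc Ioo_subset_Icc_self
      · exact integrableOn_const measure_Ioo_lt_top.ne
      · exact measurableSet_Ioo
      · intro x hx
        exact le_trans (le_add_of_nonneg_right (by positivity)) (hsup x hx)
    have h3 : (∫ _x in Ioo 0 l, Real.exp ((1+K)*l) * (‖ψ x₁‖^2 + ‖f x₁‖^2))
        = l * (Real.exp ((1+K)*l) * (‖ψ x₁‖^2 + ‖f x₁‖^2)) := by
      rw [setIntegral_const, Real.volume_real_Ioo_of_le (by linarith)]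
      simp [smul_eq_mul]
    have h4 : l * (Real.exp ((1+K)*l) * (‖ψ x₁‖^2 + ‖f x₁‖^2)) ≤ D * T := by
      rw [hDdef]
      have := mul_le_mul_of_nonneg_left
        (mul_le_mul_of_nonneg_left hEx₁ (Real.exp_nonneg ((1+K)*l))) (le_of_lt hl)
      calc l * (Real.exp ((1+K)*l) * (‖ψ x₁‖^2 + ‖f x₁‖^2))
          ≤ l * (Real.exp ((1+K)*l) * (c₃ * T)) := this
        _ = l * Real.exp ((1+K)*l) * c₃ * T := by ring
    rw [h1]
    exact h2.trans (h3 ▸ h4)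
  rw [one_div, inv_mul_le_iff₀ hD]
  exact hfinal
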